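/- Let G be a connected graph on n vertices with Laplacian eigenvalues λ₁ ≥ ⋯ ≥ λ_{n-1} > λ_n = 0 and L̂ symmetric with zero row and column sums. Then |ΔKf(G^w)| = n·|tr(L† L̂ L†)| ≤ n·ρ(L̂)·Σ_{i=1}^{n-1} 1/λ_i², where ρ(L̂) is the spectral radius of L̂. -/

import Mathlib

open Matrix

private lemma pinv_unique' {m : Type*} [Fintype m] [DecidableEq m]
    (A X Y : Matrix m m ℝ)
    (hX1 : A * X * A = A) (hX2 : X * A * X = X)
    (hX3 : (A * X)ᵀ = A * X) (hX4 : (X * A)ᵀ = X * A)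
    (hY1 : A * Y * A = A) (_hY2 : Y * A * Y = Y)
    (hY3 : (A * Y)ᵀ = A * Y) (hY4 : (Y * A)ᵀ = Y * A) :
    X = Y := by
  have hAX : A * X = A * Y := by
    calc A * X = (A * X)ᵀ := hX3.symm
      _ = ((A * Y * A) * X)ᵀ := by rw [hY1]
      _ = ((A * Y) * (A * X))ᵀ := by rw [mul_assoc]
      _ = (A * X)ᵀ * (A * Y)ᵀ := transpose_mul _ _
      _ = (A * X) * (A * Y) := by rw [hX3, hY3]
      _ = (A * X * A) * Y := by simp only [mul_assoc]
      _ = A * Y := by rw [hX1]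
  have hXA : X * A = Y * A := by
    calc X * A = (X * A)ᵀ := hX4.symm
      _ = (X * (A * Y * A))ᵀ := by rw [hY1]
      _ = ((X * A) * (Y * A))ᵀ := by simp only [mul_assoc]
      _ = (Y * A)ᵀ * (X * A)ᵀ := transpose_mul _ _
      _ = (Y * A) * (X * A) := by rw [hY4, hX4]
      _ = Y * (A * X * A) := by simp only [mul_assoc]
      _ = Y * A := by rw [hX1]
  calc X = X * A * X := hX2.symm
    _ = X * (A * Y) := by rw [mul_assoc, hAX]
    _ = (X * A) * Y := by rw [mul_assoc]
    _ = (Y * A) * Y := by rw [hXA]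
    _ = Y := _hY2

private lemma sandwich_mul' {m : Type*} [Fintype m] [DecidableEq m]
    (U A B : Matrix m m ℝ) (hU : Uᵀ * U = 1) :
    (U * A * Uᵀ) * (U * B * Uᵀ) = U * (A * B) * Uᵀ := by
  simp only [mul_assoc]
  rw [← mul_assoc Uᵀ U (B * Uᵀ), hU, one_mul]

/-- Perturbation bound for the Kirchhoff index via the spectral radius: with Laplacian
eigenvalues `λ₁ ≥ ⋯ ≥ λ_{n-1} > λ_n = 0` of a connected graph on `n` vertices and a
symmetric perturbation `L̂` with zero row and column sums,
`|ΔKf(G^w)| = n·|tr(L† L̂ L†)| ≤ n · ρ(L̂) · ∑_{i=1}^{n-1} 1/λ_i²`. -/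
theorem kirchhoff_perturbation_bound_two {n : ℕ}
    (G : SimpleGraph (Fin (n + 2))) [DecidableRel G.Adj] (hG : G.Connected)
    (Lhat : Matrix (Fin (n + 2)) (Fin (n + 2)) ℝ) (hsym : Lhatᵀ = Lhat)
    (hrow : Lhat *ᵥ (fun _ => (1 : ℝ)) = 0)
    (hcol : (fun _ => (1 : ℝ)) ᵥ* Lhat = 0)
    (hhermLhat : Lhat.IsHermitian)
    (Ld : Matrix (Fin (n + 2)) (Fin (n + 2)) ℝ)
    (h1 : G.lapMatrix ℝ * Ld * G.lapMatrix ℝ = G.lapMatrix ℝ)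
    (h2 : Ld * G.lapMatrix ℝ * Ld = Ld)
    (h3 : (G.lapMatrix ℝ * Ld)ᵀ = G.lapMatrix ℝ * Ld)
    (h4 : (Ld * G.lapMatrix ℝ)ᵀ = Ld * G.lapMatrix ℝ)
    (hhermL : (G.lapMatrix ℝ).IsHermitian)
    (lam : Fin (n + 2) → ℝ) (hanti : Antitone lam)
    (hlam : ∃ σ : Equiv.Perm (Fin (n + 2)), ∀ i, hhermL.eigenvalues (σ i) = lam i)
    (hzero : lam (Fin.last (n + 1)) = 0)
    (hpos : 0 < lam ⟨n, by omega⟩) :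
    |(((n : ℝ) + 2)) * (Ld * Lhat * Ld).trace|
      ≤ ((n : ℝ) + 2)
          * (Finset.univ.sup' Finset.univ_nonempty fun i => |hhermLhat.eigenvalues i|)
          * ∑ i ∈ Finset.univ.erase (Fin.last (n + 1)), 1 / (lam i) ^ 2 := by
  classical
  obtain ⟨σ, hσ⟩ := hlam
  set L := G.lapMatrix ℝ with hLdef
  set μ := hhermL.eigenvalues with hμdef
  set f := hhermLhat.eigenvalues with hfdef
  set U := (hhermL.eigenvectorUnitary : Matrix (Fin (n + 2)) (Fin (n + 2)) ℝ) with hUdef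
  set Q := (hhermLhat.eigenvectorUnitary : Matrix (Fin (n + 2)) (Fin (n + 2)) ℝ) with hQdef
  -- unitarity
  have hU1 : Uᵀ * U = 1 := by
    have := hhermL.eigenvectorUnitary.2.1
    rwa [Matrix.star_eq_conjTranspose, conjTranspose_eq_transpose_of_trivial] at this
  have hU2 : U * Uᵀ = 1 := by
    have := hhermL.eigenvectorUnitary.2.2
    rwa [Matrix.star_eq_conjTranspose, conjTranspose_eq_transpose_of_trivial] at this
  have hQ1 : Qᵀ * Q = 1 := by
    have := hhermLhat.eigenvectorUnitary.2.1
    rwa [Matrix.star_eq_conjTranspose, conjTranspose_eq_transpose_of_trivial] at this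
  have hQ2 : Q * Qᵀ = 1 := by
    have := hhermLhat.eigenvectorUnitary.2.2
    rwa [Matrix.star_eq_conjTranspose, conjTranspose_eq_transpose_of_trivial] at this
  -- spectral theorems
  have hLspec : L = U * diagonal μ * Uᵀ := by
    have := hhermL.spectral_theorem
    rwa [Unitary.conjStarAlgAut_apply, Matrix.star_eq_conjTranspose, conjTranspose_eq_transpose_of_trivial,
      show (RCLike.ofReal ∘ μ : Fin (n+2) → ℝ) = μ by ext i; simp] at this
  have hLhatspec : Lhat = Q * diagonal f * Qᵀ := by
    have := hhermLhat.spectral_theorem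
    rwa [Unitary.conjStarAlgAut_apply, Matrix.star_eq_conjTranspose, conjTranspose_eq_transpose_of_trivial,
      show (RCLike.ofReal ∘ f : Fin (n+2) → ℝ) = f by ext i; simp] at this
  -- the explicit pseudoinverse
  set e : Fin (n + 2) → ℝ := fun i => if μ i = 0 then 0 else (μ i)⁻¹ with hedef
  set X := U * diagonal e * Uᵀ with hXdef
  have hsandT : ∀ d : Fin (n + 2) → ℝ, (U * diagonal d * Uᵀ)ᵀ = U * diagonal d * Uᵀ := by
    intro d
    rw [transpose_mul, transpose_mul, transpose_transpose, diagonal_transpose, mul_assoc]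
  have hX1 : L * X * L = L := by
    rw [hLspec, hXdef, sandwich_mul' U _ _ hU1, sandwich_mul' U _ _ hU1,
      diagonal_mul_diagonal, diagonal_mul_diagonal]
    congr 2
    rw [diagonal_eq_diagonal_iff]
    intro i
    by_cases h : μ i = 0
    · simp [hedef, h]
    · field_simp [hedef, h]
      rw [hedef]; simp only [if_neg h]; exact mul_inv_cancel₀ h
  have hX2 : X * L * X = X := by
    rw [hLspec, hXdef, sandwich_mul' U _ _ hU1, sandwich_mul' U _ _ hU1,
      diagonal_mul_diagonal, diagonal_mul_diagonal]
    congr 2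
    rw [diagonal_eq_diagonal_iff]
    intro i
    by_cases h : μ i = 0
    · simp [hedef, h]
    · field_simp [hedef, h]
      rw [hedef]; simp only [if_neg h]; exact inv_mul_cancel₀ h
  have hX3 : (L * X)ᵀ = L * X := by
    rw [hLspec, hXdef, sandwich_mul' U _ _ hU1, diagonal_mul_diagonal]
    exact hsandT _
  have hX4 : (X * L)ᵀ = X * L := by
    rw [hLspec, hXdef, sandwich_mul' U _ _ hU1, diagonal_mul_diagonal]
    exact hsandT _
  have hLdX : Ld = X := pinv_unique' L Ld X h1 h2 h3 h4 hX1 hX2 hX3 hX4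
  -- rewrite Lhat in the U basis
  set B := Uᵀ * Q with hBdef
  have hBB : B * Bᵀ = 1 := by
    rw [hBdef, transpose_mul, transpose_transpose, mul_assoc, ← mul_assoc Q Qᵀ U, hQ2,
      one_mul, hU1]
  have hLhatU : Lhat = U * (B * diagonal f * Bᵀ) * Uᵀ := by
    rw [hLhatspec, hBdef, transpose_mul, transpose_transpose]
    simp only [mul_assoc]
    rw [hU2, mul_one, ← mul_assoc U Uᵀ, hU2, one_mul]
  -- trace computation
  set M := diagonal e * (B * diagonal f * Bᵀ) * diagonal e with hMdef
  have htrace : (Ld * Lhat * Ld).trace = M.trace := by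
    rw [hLdX, hXdef, hLhatU, sandwich_mul' U _ _ hU1, sandwich_mul' U _ _ hU1]
    rw [trace_mul_cycle, ← mul_assoc, hU1, one_mul]
  have hMdiag : ∀ i, M i i = e i * (∑ k, B i k * f k * B i k) * e i := by
    intro i
    rw [hMdef, mul_diagonal, diagonal_mul]
    congr 2
    rw [mul_apply]
    refine Finset.sum_congr rfl fun k _ => ?_
    rw [mul_diagonal, transpose_apply]
  set ρ := Finset.univ.sup' Finset.univ_nonempty fun i => |f i| with hρdef
  have hρk : ∀ k, |f k| ≤ ρ := by
    intro k
    rw [hρdef]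
    exact Finset.le_sup' (fun i => |f i|) (Finset.mem_univ k)
  have hρ0 : 0 ≤ ρ := le_trans (abs_nonneg _) (hρk ⟨0, by omega⟩)
  have hBrow : ∀ i, ∑ k, (B i k) ^ 2 = 1 := by
    intro i
    have := congrFun (congrFun hBB i) i
    simpa [mul_apply, transpose_apply, pow_two] using this
  have hMi : ∀ i, |M i i| ≤ ρ * (e i) ^ 2 := by
    intro i
    rw [hMdiag i]
    rw [show e i * (∑ k, B i k * f k * B i k) * e i
        = (e i) ^ 2 * ∑ k, B i k * f k * B i k by ring,
      abs_mul, abs_of_nonneg (sq_nonneg _)]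
    have h2' : |∑ k, B i k * f k * B i k| ≤ ρ := by
      calc |∑ k, B i k * f k * B i k| ≤ ∑ k, |B i k * f k * B i k| :=
            Finset.abs_sum_le_sum_abs _ _
        _ ≤ ∑ k, ρ * (B i k) ^ 2 := by
            refine Finset.sum_le_sum fun k _ => ?_
            rw [show B i k * f k * B i k = f k * (B i k) ^ 2 by ring,
              abs_mul, abs_of_nonneg (sq_nonneg (B i k))]
            exact mul_le_mul_of_nonneg_right (hρk k) (sq_nonneg _)
        _ = ρ * ∑ k, (B i k) ^ 2 := by rw [Finset.mul_sum]
        _ = ρ := by rw [hBrow i, mul_one]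
    calc (e i) ^ 2 * |∑ k, B i k * f k * B i k| ≤ (e i) ^ 2 * ρ :=
          mul_le_mul_of_nonneg_left h2' (sq_nonneg _)
      _ = ρ * (e i) ^ 2 := mul_comm _ _
  -- sum of e i ^ 2
  have hlampos : ∀ j : Fin (n + 2), j ≠ Fin.last (n + 1) → 0 < lam j := by
    intro j hj
    have hjlt : (j : ℕ) < n + 1 := by
      by_contra hcon
      push_neg at hcon
      have hje : j = Fin.last (n + 1) := by
        apply Fin.ext
        have := j.isLt
        simp only [Fin.val_last]
        omega
      exact hj hje
    have hjle : j ≤ (⟨n, by omega⟩ : Fin (n + 2)) := by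
      rw [Fin.le_def]
      exact Nat.lt_succ_iff.mp hjlt
    exact lt_of_lt_of_le hpos (hanti hjle)
  have hesum : ∑ i, (e i) ^ 2
      = ∑ i ∈ Finset.univ.erase (Fin.last (n + 1)), 1 / (lam i) ^ 2 := by
    rw [← Equiv.sum_comp σ (fun i => (e i) ^ 2)]
    have hterm : ∀ j : Fin (n + 2), (e (σ j)) ^ 2
        = if j = Fin.last (n + 1) then 0 else 1 / (lam j) ^ 2 := by
      intro j
      by_cases hj : j = Fin.last (n + 1)
      · subst hj
        simp [hedef, hσ, hzero]
      · have hl := hlampos j hj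
        rw [if_neg hj]
        simp only [hedef, hσ j]
        rw [if_neg (ne_of_gt hl), one_div, ← inv_pow]
    calc ∑ j, (e (σ j)) ^ 2
        = ∑ j, if j = Fin.last (n + 1) then 0 else 1 / (lam j) ^ 2 :=
          Finset.sum_congr rfl fun j _ => hterm j
      _ = ∑ j ∈ Finset.univ.erase (Fin.last (n + 1)), 1 / (lam j) ^ 2 := by
          rw [← Finset.sum_erase_add _ _ (Finset.mem_univ (Fin.last (n + 1)))]
          rw [if_pos rfl, add_zero]
          refine Finset.sum_congr rfl fun j hj => ?_
          rw [if_neg (Finset.ne_of_mem_erase hj)]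
  -- final bound on the trace
  have hboundtr : |(Ld * Lhat * Ld).trace|
      ≤ ρ * ∑ i ∈ Finset.univ.erase (Fin.last (n + 1)), 1 / (lam i) ^ 2 := by
    rw [htrace, ← hesum, Matrix.trace]
    calc |∑ i, M.diag i| ≤ ∑ i, |M.diag i| := Finset.abs_sum_le_sum_abs _ _
      _ ≤ ∑ i, ρ * (e i) ^ 2 := Finset.sum_le_sum fun i _ => hMi i
      _ = ρ * ∑ i, (e i) ^ 2 := by rw [Finset.mul_sum]
  have hn2 : (0 : ℝ) ≤ (n : ℝ) + 2 := by positivity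
  rw [abs_mul, abs_of_nonneg hn2, mul_assoc ((n : ℝ) + 2)]
  exact mul_le_mul_of_nonneg_left hboundtr hn2
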